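/- arXiv:1108.6004 — 2 statements merged into one kernel-verified Lean document; each statement's English description precedes it below -/
import Mathlib

section
/- Let θ_a and θ_a^i (a = 1,…,n; i = 1,…,m) be real-valued functions on the set of regular velocities {(x, u) ∈ ℝ^n × (ℝ^m →ₗ[ℝ] ℝ^n) : u injective}, the components of a 1-form θ = θ_a du^a + θ_a^i du_i^a. Then the following are equivalent: (1) for every smooth map γ : ℝ^m → ℝ^n with Dγ(0) injective, the pullback of θ along the prolongation j¹γ vanishes at 0, i.e. for every k = 1,…,m, Σ_a θ_a(γ(0), Dγ(0)) ∂_kγ^a(0) + Σ_{a,i} θ_a^i(γ(0), Dγ(0)) ∂_i∂_kγ^a(0) = 0; (2) θ is a horizontal contact form, i.e. θ_a^i(x,u) = 0 for all a, i and Σ_a u_k^a θ_a(x,u) = 0 for all k, at every (x,u) with u injective (where u_k^a is the a-th component of u e_k). -/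
section Aux

variable {m n : ℕ}

private lemma lin_fderiv (x : Fin n → ℝ) (u : (Fin m → ℝ) →L[ℝ] (Fin n → ℝ)) :
    fderiv ℝ (fun t => x + u t) = fun _ : Fin m → ℝ => u :=
  funext fun _ => ((u.hasFDerivAt).const_add x).fderiv

private lemma sq_hasFDerivAt (i0 : Fin m) (y : Fin m → ℝ) :
    HasFDerivAt (fun t : Fin m → ℝ => t i0 * t i0)
      ((2 * y i0) • (ContinuousLinearMap.proj i0 : (Fin m → ℝ) →L[ℝ] ℝ)) y := by
  have hp : HasFDerivAt (fun t : Fin m → ℝ => t i0)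
      (ContinuousLinearMap.proj i0 : (Fin m → ℝ) →L[ℝ] ℝ) y :=
    by exact (ContinuousLinearMap.proj i0 : (Fin m → ℝ) →L[ℝ] ℝ).hasFDerivAt (x := y)
  have h := hp.mul hp
  have e : (2 * y i0) • (ContinuousLinearMap.proj i0 : (Fin m → ℝ) →L[ℝ] ℝ)
      = y i0 • ContinuousLinearMap.proj i0 + y i0 • ContinuousLinearMap.proj i0 := by
    rw [two_mul, add_smul]
  rw [e]; exact h

private lemma quad_fderiv (x : Fin n → ℝ) (u : (Fin m → ℝ) →L[ℝ] (Fin n → ℝ))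
    (i0 : Fin m) (v : Fin n → ℝ) :
    fderiv ℝ (fun t => x + u t + (t i0 * t i0) • v)
      = fun y => u + (2 * y i0) •
          ((ContinuousLinearMap.proj i0 : (Fin m → ℝ) →L[ℝ] ℝ).smulRight v) := by
  funext y
  have h2 : HasFDerivAt (fun t : Fin m → ℝ => (t i0 * t i0) • v)
      (((2 * y i0) • (ContinuousLinearMap.proj i0 : (Fin m → ℝ) →L[ℝ] ℝ)).smulRight v) y :=
    (sq_hasFDerivAt i0 y).smul_const v
  have h := ((u.hasFDerivAt).const_add x).add h2
  have e : ((2 * y i0) • (ContinuousLinearMap.proj i0 : (Fin m → ℝ) →L[ℝ] ℝ)).smulRight v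
      = (2 * y i0) • ((ContinuousLinearMap.proj i0 : (Fin m → ℝ) →L[ℝ] ℝ).smulRight v) := by
    ext t
    simp [ContinuousLinearMap.smulRight_apply, smul_smul, mul_assoc]
  rw [e] at h
  exact h.fderiv

private lemma quad_contDiff (x : Fin n → ℝ) (u : (Fin m → ℝ) →L[ℝ] (Fin n → ℝ))
    (i0 : Fin m) (v : Fin n → ℝ) :
    ContDiff ℝ (⊤ : ℕ∞) (fun t => x + u t + (t i0 * t i0) • v) := by
  have hq : ContDiff ℝ (⊤ : ℕ∞) (fun t : Fin m → ℝ => t i0) := by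
    exact (ContinuousLinearMap.proj i0 : (Fin m → ℝ) →L[ℝ] ℝ).contDiff
  exact (contDiff_const.add u.contDiff).add ((hq.mul hq).smul contDiff_const)

end Aux

/-- Characterisation of contact 1-forms on the regular
velocity manifold `T̊_mℝ^n ≅ {(x,u) : u injective}`. For a 1-form
`θ = θ_a du^a + θ_a^i du_i^a` with component functions `θa`, `θai`, the
following are equivalent:
(1) the pullback of `θ` along the prolongation `j¹γ` of every immersion-at-0
`γ` vanishes at `0`;
(2) `θ` is a horizontal contact form: `θ_a^i = 0` and `Σ_a u_k^a θ_a = 0` at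
every regular velocity `(x,u)`. -/
theorem contact_one_form_characterisation (m n : ℕ)
    (θa : ((Fin n → ℝ) × ((Fin m → ℝ) →L[ℝ] (Fin n → ℝ))) → Fin n → ℝ)
    (θai : ((Fin n → ℝ) × ((Fin m → ℝ) →L[ℝ] (Fin n → ℝ))) → Fin n → Fin m → ℝ) :
    (∀ γ : (Fin m → ℝ) → (Fin n → ℝ), ContDiff ℝ (⊤ : ℕ∞) γ →
      Function.Injective (fderiv ℝ γ 0) →
      ∀ k : Fin m,
        (∑ a, θa (γ 0, fderiv ℝ γ 0) a * fderiv ℝ γ 0 (Pi.single k 1) a) +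
          (∑ a, ∑ i, θai (γ 0, fderiv ℝ γ 0) a i *
            fderiv ℝ (fderiv ℝ γ) 0 (Pi.single k 1) (Pi.single i 1) a) = 0)
    ↔
    (∀ (x : Fin n → ℝ) (u : (Fin m → ℝ) →L[ℝ] (Fin n → ℝ)),
      Function.Injective u →
      (∀ a i, θai (x, u) a i = 0) ∧
      (∀ k, ∑ a, u (Pi.single k 1) a * θa (x, u) a = 0)) := by
  constructor
  · intro h x u hu
    -- Step A: linear curve gives the contact condition.
    have hA : ∀ k : Fin m, ∑ a, θa (x, u) a * u (Pi.single k 1) a = 0 := by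
      intro k
      have hfd := lin_fderiv x u
      have key := h (fun t => x + u t) (contDiff_const.add u.contDiff)
        (by rw [hfd]; exact hu) k
      rw [hfd] at key
      simpa [fderiv_const] using key
    refine ⟨?_, fun k => by simpa [mul_comm] using hA k⟩
    -- Step B: quadratic curves kill the θai components.
    intro a0 i0
    set v : Fin n → ℝ := Pi.single a0 1 with hv
    set P : (Fin m → ℝ) →L[ℝ] ℝ := ContinuousLinearMap.proj i0 with hP
    set C : (Fin m → ℝ) →L[ℝ] (Fin n → ℝ) := P.smulRight v with hC
    set γ : (Fin m → ℝ) → Fin n → ℝ := fun t => x + u t + (t i0 * t i0) • v with hγ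
    have hfd : fderiv ℝ γ = fun y => u + (2 * y i0) • C := quad_fderiv x u i0 v
    have h0 : fderiv ℝ γ 0 = u := by rw [hfd]; simp
    -- second derivative
    set L : (Fin m → ℝ) →L[ℝ] ((Fin m → ℝ) →L[ℝ] (Fin n → ℝ)) :=
      ((2 : ℝ) • P).smulRight C with hL
    have hF : HasFDerivAt (fun y => u + (2 * y i0) • C) L 0 := by
      have h := (L.hasFDerivAt (x := (0 : Fin m → ℝ))).const_add u
      have e : (fun y : Fin m → ℝ => u + L y) = fun y => u + (2 * y i0) • C := by
        funext y
        simp [hL, ContinuousLinearMap.smulRight_apply, hP, smul_eq_mul]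
      rwa [e] at h
    have h2 : fderiv ℝ (fderiv ℝ γ) 0 = L := by rw [hfd]; exact hF.fderiv
    have hγ0 : γ 0 = x := by simp [hγ]
    have key := h γ (quad_contDiff x u i0 v) (by rw [h0]; exact hu) i0
    rw [h0, h2, hγ0] at key
    have hLval : ∀ (i : Fin m) (a : Fin n),
        L (Pi.single i0 1) (Pi.single i 1) a
          = (if i = i0 then 2 else 0) * (if a = a0 then 1 else 0) := by
      intro i a
      by_cases hi : i = i0 <;> by_cases ha : a = a0 <;>
        simp [hL, hC, hP, hv, hi, ha, ContinuousLinearMap.smulRight_apply,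
          ContinuousLinearMap.proj_apply, Pi.single_apply, smul_eq_mul]
    rw [hA i0] at key
    simp only [hLval, zero_add] at key
    -- key : ∑ a, ∑ i, θai (x,u) a i * (ite ...) = 0
    have : (∑ a, ∑ i, θai (x, u) a i *
        ((if i = i0 then (2:ℝ) else 0) * (if a = a0 then 1 else 0)))
        = 2 * θai (x, u) a0 i0 := by
      rw [Finset.sum_comm]
      simp [Finset.mul_sum, mul_ite, ite_mul, mul_comm]
    rw [this] at key
    linarith
  · intro h γ hγ hinj k
    obtain ⟨h1, h2⟩ := h (γ 0) (fderiv ℝ γ 0) hinj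
    have e1 : (∑ a, θa (γ 0, fderiv ℝ γ 0) a * fderiv ℝ γ 0 (Pi.single k 1) a) = 0 := by
      rw [← h2 k]
      exact Finset.sum_congr rfl fun a _ => mul_comm _ _
    simp [h1, e1]
end

section
/- Let L : ℝ^n × (ℝ^m →ₗ[ℝ] ℝ^n) → ℝ be smooth, let γ : ℝ^m → ℝ^n be smooth, and let C = [a, b] ⊂ ℝ^m be a closed box with nonempty interior. Say γ is an extremal over C if for every smooth V : ℝ^m → ℝ^n vanishing on the boundary ∂C, ∫_C Σ_a [ (∂L/∂x^a)(j¹γ(t)) V^a(t) + Σ_i (∂L/∂u_i^a)(j¹γ(t)) ∂_iV^a(t) ] dt = 0. Then γ is an extremal over C if and only if the Euler–Lagrange expressions E_a(t) = (∂L/∂x^a)(j¹γ(t)) − Σ_i ∂/∂t^i( (∂L/∂u_i^a)(j¹γ(t)) ) vanish for every a = 1,…,n and every t in the interior of C. -/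
open MeasureTheory

/-- The basis element of the fibre of `T_mℝ^n` corresponding to the fibre
coordinate `u_i^a`: the linear map `ℝ^m → ℝ^n` sending `v ↦ v_i • e_a`. -/
noncomputable def fibreDir (m n : ℕ) (i : Fin m) (a : Fin n) :
    (Fin m → ℝ) →L[ℝ] (Fin n → ℝ) :=
  (ContinuousLinearMap.proj i : (Fin m → ℝ) →L[ℝ] ℝ).smulRight (Pi.single a 1)


lemma interior_Icc_pi {m : ℕ} (lo hi : Fin m → ℝ) :
    interior (Set.Icc lo hi) = Set.pi Set.univ fun i => Set.Ioo (lo i) (hi i) := by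
  rw [← Set.pi_univ_Icc, interior_pi_set Set.finite_univ]
  simp

lemma ibp {m : ℕ} (lo hi : Fin m → ℝ) (hbox : ∀ i, lo i < hi i)
    (g : Fin m → (Fin m → ℝ) → ℝ) (hg : ∀ i, ContDiff ℝ (⊤:ℕ∞) (g i))
    (v : (Fin m → ℝ) → ℝ) (hv : ContDiff ℝ (⊤:ℕ∞) v)
    (hv0 : ∀ t ∈ frontier (Set.Icc lo hi), v t = 0) :
    ∫ t in Set.Icc lo hi,
      ∑ i, fderiv ℝ (fun s => g i s * v s) t (Pi.single i 1) = 0 := by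
  obtain _ | k := m
  · have : ∀ t : Fin 0 → ℝ,
        (∑ i, fderiv ℝ (fun s => g i s * v s) t (Pi.single i 1)) = 0 := by
      intro t; simp
    simp only [this, integral_zero]
  · rw [MeasureTheory.integral_divergence_of_hasFDerivAt_off_countable' lo hi
      (fun i => (hbox i).le) (fun i t => g i t * v t)
      (fun i t => fderiv ℝ (fun s => g i s * v s) t) ∅ Set.countable_empty
      (fun i => ((hg i).continuous.mul hv.continuous).continuousOn)
      (fun x _ i => (((hg i).mul hv).differentiable (by simp) x).hasFDerivAt)
      ?_]
    · apply Finset.sum_eq_zero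
      intro i _
      have hfr : ∀ (c : ℝ), c ∈ Set.Icc (lo i) (hi i) → ¬ (lo i < c ∧ c < hi i) →
          ∀ x ∈ Set.Icc (lo ∘ i.succAbove) (hi ∘ i.succAbove),
          v (i.insertNth c x) = 0 := by
        intro c hc hninterior x hx
        apply hv0
        rw [isClosed_Icc.frontier_eq]
        constructor
        · exact (Fin.insertNth_mem_Icc).2 ⟨hc, hx⟩
        · rw [interior_Icc_pi]
          intro hmem
          exact hninterior (by simpa using hmem i (Set.mem_univ i))
      rw [setIntegral_eq_zero_of_forall_eq_zero, setIntegral_eq_zero_of_forall_eq_zero,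
        sub_zero]
      · intro x hx
        rw [hfr (lo i) (Set.left_mem_Icc.2 (hbox i).le) (fun h => lt_irrefl _ h.1) x hx,
          mul_zero]
      · intro x hx
        rw [hfr (hi i) (Set.right_mem_Icc.2 (hbox i).le) (fun h => lt_irrefl _ h.2) x hx,
          mul_zero]
    · apply Continuous.integrableOn_Icc
      apply continuous_finset_sum
      intro i _
      exact (((((hg i).mul hv).fderiv_right (m := ((⊤:ℕ∞) : WithTop ℕ∞))
        (by simp))).clm_apply contDiff_const).continuous

/-- The Euler–Lagrange expression. -/
noncomputable def EL (m n : ℕ)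
    (L : ((Fin n → ℝ) × ((Fin m → ℝ) →L[ℝ] (Fin n → ℝ))) → ℝ)
    (γ : (Fin m → ℝ) → (Fin n → ℝ)) (a : Fin n) (t : Fin m → ℝ) : ℝ :=
  fderiv ℝ L (γ t, fderiv ℝ γ t) (Pi.single a 1, 0) -
    ∑ i, fderiv ℝ
      (fun s => fderiv ℝ L (γ s, fderiv ℝ γ s) (0, fibreDir m n i a)) t
      (Pi.single i 1)

section Aux

variable (m n : ℕ)
    (L : ((Fin n → ℝ) × ((Fin m → ℝ) →L[ℝ] (Fin n → ℝ))) → ℝ)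
    (γ : (Fin m → ℝ) → (Fin n → ℝ))

/-- value of `dL` along the jet, in a fixed direction `w`. -/
noncomputable def dLj (w : (Fin n → ℝ) × ((Fin m → ℝ) →L[ℝ] (Fin n → ℝ)))
    (t : Fin m → ℝ) : ℝ :=
  fderiv ℝ L (γ t, fderiv ℝ γ t) w

variable {m n L γ}

lemma dLj_smooth (hL : ContDiff ℝ (⊤:ℕ∞) L) (hγ : ContDiff ℝ (⊤:ℕ∞) γ)
    (w : (Fin n → ℝ) × ((Fin m → ℝ) →L[ℝ] (Fin n → ℝ))) :
    ContDiff ℝ (⊤:ℕ∞) (dLj m n L γ w) :=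
  (((hL.fderiv_right (m := ((⊤:ℕ∞) : WithTop ℕ∞)) (by simp)).comp
      (hγ.prodMk (hγ.fderiv_right (m := ((⊤:ℕ∞) : WithTop ℕ∞)) (by simp)))).clm_apply
    contDiff_const)

lemma EL_smooth (hL : ContDiff ℝ (⊤:ℕ∞) L) (hγ : ContDiff ℝ (⊤:ℕ∞) γ) (a : Fin n) :
    ContDiff ℝ (⊤:ℕ∞) (EL m n L γ a) := by
  apply ContDiff.sub
  · exact dLj_smooth hL hγ _
  · apply ContDiff.sum
    intro i _
    exact (((dLj_smooth hL hγ (0, fibreDir m n i a)).fderiv_right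
      (m := ((⊤:ℕ∞) : WithTop ℕ∞)) (by simp))).clm_apply contDiff_const

lemma key (hL : ContDiff ℝ (⊤:ℕ∞) L) (hγ : ContDiff ℝ (⊤:ℕ∞) γ)
    (lo hi : Fin m → ℝ) (hbox : ∀ i, lo i < hi i)
    (V : (Fin m → ℝ) → (Fin n → ℝ)) (hV : ContDiff ℝ (⊤:ℕ∞) V)
    (hV0 : ∀ t ∈ frontier (Set.Icc lo hi), V t = 0) :
    (∫ t in Set.Icc lo hi,
      ∑ a, (fderiv ℝ L (γ t, fderiv ℝ γ t) (Pi.single a 1, 0) * V t a +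
        ∑ i, fderiv ℝ L (γ t, fderiv ℝ γ t) (0, fibreDir m n i a) *
          fderiv ℝ V t (Pi.single i 1) a))
    = ∫ t in Set.Icc lo hi, ∑ a, EL m n L γ a t * V t a := by
  have hVa : ∀ a, ContDiff ℝ (⊤:ℕ∞) (fun t => V t a) := fun a => contDiff_pi.1 hV a
  have hfderivVa : ∀ (a : Fin n) (t : Fin m → ℝ) (w : Fin m → ℝ),
      fderiv ℝ (fun s => V s a) t w = fderiv ℝ V t w a := by
    intro a t w
    have : fderiv ℝ (fun s => V s a) t =
        (ContinuousLinearMap.proj a).comp (fderiv ℝ V t) :=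
      (hasFDerivAt_pi'.1 (hV.differentiable (by simp) t).hasFDerivAt a).fderiv
    rw [this]; rfl
  -- pointwise rearrangement
  have hpt : ∀ t : Fin m → ℝ,
      (∑ a, (fderiv ℝ L (γ t, fderiv ℝ γ t) (Pi.single a 1, 0) * V t a +
        ∑ i, fderiv ℝ L (γ t, fderiv ℝ γ t) (0, fibreDir m n i a) *
          fderiv ℝ V t (Pi.single i 1) a))
      = (∑ a, EL m n L γ a t * V t a) +
        ∑ a, ∑ i, fderiv ℝ
          (fun s => dLj m n L γ (0, fibreDir m n i a) s * V s a) t (Pi.single i 1) := by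
    intro t
    rw [← Finset.sum_add_distrib]
    apply Finset.sum_congr rfl
    intro a _
    have hmul : ∀ i : Fin m,
        fderiv ℝ (fun s => dLj m n L γ (0, fibreDir m n i a) s * V s a) t (Pi.single i 1)
        = dLj m n L γ (0, fibreDir m n i a) t * fderiv ℝ V t (Pi.single i 1) a +
          V t a * fderiv ℝ (dLj m n L γ (0, fibreDir m n i a)) t (Pi.single i 1) := by
      intro i
      rw [fderiv_fun_mul ((dLj_smooth hL hγ _).differentiable (by simp) t)
        ((hVa a).differentiable (by simp) t)]
      simp [hfderivVa a t]
    have hdLj : ∀ w, dLj m n L γ w = fun s => fderiv ℝ L (γ s, fderiv ℝ γ s) w :=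
      fun w => rfl
    simp only [hdLj] at hmul ⊢
    simp only [hmul, EL]
    rw [Finset.sum_add_distrib, ← Finset.mul_sum, sub_mul]
    ring
  simp only [hpt]
  have hccont : ∀ (f : (Fin m → ℝ) → ℝ), Continuous f →
      IntegrableOn f (Set.Icc lo hi) := fun f hf => hf.integrableOn_Icc
  have h1 : IntegrableOn (fun t => ∑ a, EL m n L γ a t * V t a) (Set.Icc lo hi) := by
    apply hccont
    exact continuous_finset_sum _ fun a _ =>
      ((EL_smooth hL hγ a).continuous).mul (hVa a).continuous
  have h2 : ∀ a : Fin n, IntegrableOn (fun t => ∑ i, fderiv ℝ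
      (fun s => dLj m n L γ (0, fibreDir m n i a) s * V s a) t (Pi.single i 1))
      (Set.Icc lo hi) := by
    intro a
    apply hccont
    apply continuous_finset_sum
    intro i _
    exact ((((dLj_smooth hL hγ _).mul (hVa a)).fderiv_right
      (m := ((⊤:ℕ∞) : WithTop ℕ∞)) (by simp)).clm_apply contDiff_const).continuous
  rw [integral_add h1 (by exact integrable_finset_sum _ fun a _ => h2 a)]
  rw [integral_finset_sum _ fun a _ => h2 a]
  have hz : ∀ a : Fin n, (∫ t in Set.Icc lo hi, ∑ i, fderiv ℝ
      (fun s => dLj m n L γ (0, fibreDir m n i a) s * V s a) t (Pi.single i 1)) = 0 := by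
    intro a
    exact ibp lo hi hbox _ (fun i => dLj_smooth hL hγ _) _ (hVa a)
      (fun t ht => by rw [show V t = 0 from hV0 t ht]; rfl)
  simp only [hz, Finset.sum_const_zero, add_zero]

end Aux

/-- For a smooth Lagrangian `L` on `T_mℝ^n`, a smooth
`m`-curve `γ` and a closed box `C = [lo, hi]` with nonempty interior, `γ` is an
extremal over `C` (the first variation vanishes for every smooth variation
field `V` vanishing on `∂C`) if and only if the Euler–Lagrange expressions
`E_a(t) = L_{x^a}(j¹γ(t)) − Σ_i ∂_i(L_{u_i^a}(j¹γ(t)))` vanish for every `a`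
and every `t` in the interior of `C`. Here `j¹γ(t) = (γ t, Dγ t)`. -/
theorem extremal_iff_euler_lagrange (m n : ℕ)
    (L : ((Fin n → ℝ) × ((Fin m → ℝ) →L[ℝ] (Fin n → ℝ))) → ℝ)
    (hL : ContDiff ℝ (⊤ : ℕ∞) L)
    (γ : (Fin m → ℝ) → (Fin n → ℝ)) (hγ : ContDiff ℝ (⊤ : ℕ∞) γ)
    (lo hi : Fin m → ℝ) (hbox : ∀ i, lo i < hi i) :
    (∀ V : (Fin m → ℝ) → (Fin n → ℝ), ContDiff ℝ (⊤ : ℕ∞) V →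
      (∀ t ∈ frontier (Set.Icc lo hi), V t = 0) →
      (∫ t in Set.Icc lo hi,
        ∑ a, (fderiv ℝ L (γ t, fderiv ℝ γ t) (Pi.single a 1, 0) * V t a +
          ∑ i, fderiv ℝ L (γ t, fderiv ℝ γ t) (0, fibreDir m n i a) *
            fderiv ℝ V t (Pi.single i 1) a)) = 0)
    ↔
    (∀ (a : Fin n), ∀ t ∈ interior (Set.Icc lo hi),
      fderiv ℝ L (γ t, fderiv ℝ γ t) (Pi.single a 1, 0) -
        (∑ i, fderiv ℝ
          (fun s => fderiv ℝ L (γ s, fderiv ℝ γ s) (0, fibreDir m n i a)) t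
          (Pi.single i 1)) = 0) := by
  constructor
  · intro H a t₀ ht₀
    by_contra hc
    have hc' : EL m n L γ a t₀ ≠ 0 := hc
    set c := EL m n L γ a t₀ with hcdef
    obtain ⟨ε, hε, hball⟩ := Metric.isOpen_iff.1 isOpen_interior t₀ ht₀
    have hcont : ContinuousAt (EL m n L γ a) t₀ :=
      ((EL_smooth hL hγ a).continuous).continuousAt
    obtain ⟨δ, hδpos, hδ⟩ := Metric.continuousAt_iff.1 hcont (|c|/2)
      (by positivity)
    set r := min ε δ with hrdef
    have hr : 0 < r := lt_min hε hδpos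
    let φ : ContDiffBump t₀ := ⟨r/2, r, by positivity, by linarith⟩
    have hφout : φ.rOut = r := rfl
    set V : (Fin m → ℝ) → (Fin n → ℝ) := fun t => φ t • (Pi.single a 1 : Fin n → ℝ) with hVdef
    have hVsm : ContDiff ℝ (⊤:ℕ∞) V := φ.contDiff.smul contDiff_const
    have hballsub : Metric.ball t₀ r ⊆ interior (Set.Icc lo hi) :=
      (Metric.ball_subset_ball (min_le_left _ _)).trans hball
    have hV0 : ∀ t ∈ frontier (Set.Icc lo hi), V t = 0 := by
      intro t ht
      rw [isClosed_Icc.frontier_eq] at ht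
      have htb : t ∉ Metric.ball t₀ r := fun hmem => ht.2 (hballsub hmem)
      have : φ t = 0 := φ.zero_of_le_dist (le_of_not_gt (by simpa [Metric.mem_ball] using htb))
      simp [hVdef, this]
    have hI := H V hVsm hV0
    rw [key hL hγ lo hi hbox V hVsm hV0] at hI
    have hsum : ∀ t, (∑ b, EL m n L γ b t * V t b) = EL m n L γ a t * φ t := by
      intro t
      rw [Finset.sum_eq_single a]
      · simp [hVdef]
      · intro b _ hb
        simp [hVdef, Pi.single_eq_of_ne hb]
      · intro h; exact absurd (Finset.mem_univ a) h
    simp only [hsum] at hI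
    -- integral of the bump over the box
    have hsupp : ∀ t, t ∉ Set.Icc lo hi → φ t = 0 := by
      intro t ht
      by_contra h
      exact ht (interior_subset (hballsub (by
        rw [← φ.support_eq]; exact h)))
    have hIφeq : (∫ t in Set.Icc lo hi, φ t) = ∫ t, φ t :=
      setIntegral_eq_integral_of_forall_compl_eq_zero hsupp
    have hIφpos : 0 < ∫ t in Set.Icc lo hi, φ t := by
      rw [hIφeq]; exact φ.integral_pos
    -- pointwise bound
    have hptb : ∀ t, ‖(c - EL m n L γ a t) * φ t‖ ≤ |c|/2 * φ t := by
      intro t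
      rcases le_or_gt r (dist t t₀) with h | h
      · rw [φ.zero_of_le_dist h]; simp
      · have hd : dist t t₀ < δ := lt_of_lt_of_le h (min_le_right _ _)
        have := hδ hd
        rw [Real.norm_eq_abs, abs_mul, abs_of_nonneg (φ.nonneg' t)]
        apply mul_le_mul_of_nonneg_right _ (φ.nonneg' t)
        rw [abs_sub_comm]
        rw [Real.dist_eq] at this
        exact this.le
    -- integrability
    have hφint : IntegrableOn (fun t => φ t) (Set.Icc lo hi) :=
      φ.continuous.integrableOn_Icc
    have hELφint : IntegrableOn (fun t => EL m n L γ a t * φ t) (Set.Icc lo hi) :=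
      ((EL_smooth hL hγ a).continuous.mul φ.continuous).integrableOn_Icc
    have hIc : (∫ t in Set.Icc lo hi, (c - EL m n L γ a t) * φ t)
        = c * ∫ t in Set.Icc lo hi, φ t := by
      have : (fun t => (c - EL m n L γ a t) * φ t)
          = fun t => c * φ t - EL m n L γ a t * φ t := by
        funext t; ring
      rw [this, integral_sub (hφint.const_mul c) hELφint, hI, sub_zero,
        MeasureTheory.integral_const_mul]
    have hbound : ‖∫ t in Set.Icc lo hi, (c - EL m n L γ a t) * φ t‖
        ≤ ∫ t in Set.Icc lo hi, |c|/2 * φ t :=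
      norm_integral_le_of_norm_le (hφint.const_mul (|c|/2))
        (Filter.Eventually.of_forall hptb)
    rw [hIc, MeasureTheory.integral_const_mul] at hbound
    rw [Real.norm_eq_abs, abs_mul,
      abs_of_pos hIφpos] at hbound
    have habs : 0 < |c| := abs_pos.2 hc'
    nlinarith [hIφpos, hbound, habs]
  · intro H V hV hV0
    rw [key hL hγ lo hi hbox V hV hV0]
    apply setIntegral_eq_zero_of_forall_eq_zero
    intro t ht
    by_cases h : t ∈ interior (Set.Icc lo hi)
    · apply Finset.sum_eq_zero
      intro b _
      have hb : EL m n L γ b t = 0 := H b t h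
      rw [hb, zero_mul]
    · have hfr : t ∈ frontier (Set.Icc lo hi) := by
        rw [isClosed_Icc.frontier_eq]; exact ⟨ht, h⟩
      apply Finset.sum_eq_zero
      intro b _
      rw [hV0 t hfr]
      simp
end
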